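/- Let 0 < r₀ < 1 and let u : [r₀, 1) × ℝ → ℝ be twice continuously differentiable and 2π-periodic in its second variable θ. Define W(r,θ) := √(1 + ((1−r²)²/4)·(u_r(r,θ)² + u_θ(r,θ)²/r²)). Assume that u satisfies the divergence-form minimal graph equation ∂_r( r·u_r/W ) + ∂_θ( u_θ/(r·W) ) = 0 at every point of [r₀,1) × ℝ. Then the function r ↦ ∫₀^{2π} r·u_r(r,θ)·u_θ(r,θ)/W(r,θ) dθ is constant on [r₀, 1). If moreover u extends to a continuously differentiable function on [r₀,1] × ℝ, then this constant value equals ∫₀^{2π} u_r(1,θ)·u_θ(1,θ) dθ. -/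

import Mathlib

open Set MeasureTheory intervalIntegral Filter Topology

lemma flux_cs (a b x1 y1 x2 y2 : ℝ) (ha : 0 ≤ a) (hb : 0 ≤ b) :
    1 + a*(x1*x2) + b*(y1*y2) ≤
      Real.sqrt (1 + a*x1^2 + b*y1^2) * Real.sqrt (1 + a*x2^2 + b*y2^2) := by
  have h1 : (0:ℝ) ≤ 1 + a*x1^2 + b*y1^2 := by positivity
  rcases le_or_gt (1 + a*(x1*x2) + b*(y1*y2)) 0 with hc | hc
  · exact hc.trans (mul_nonneg (Real.sqrt_nonneg _) (Real.sqrt_nonneg _))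
  · rw [← Real.sqrt_mul h1]
    rw [show (1 + a*(x1*x2) + b*(y1*y2)) = Real.sqrt ((1 + a*(x1*x2) + b*(y1*y2))^2) from
      (Real.sqrt_sq hc.le).symm]
    apply Real.sqrt_le_sqrt
    nlinarith [sq_nonneg (x1 - x2), sq_nonneg (y1 - y2), sq_nonneg (x1*y2 - x2*y1),
      mul_nonneg ha hb, sq_nonneg x1, sq_nonneg x2, sq_nonneg y1, sq_nonneg y2]

lemma flux_pt (r x1 y1 x2 y2 : ℝ) (hr : 0 < r) (hr1 : r < 1) :
    (x2 - x1) * (r * x1 / Real.sqrt (1 + ((1 - r^2)^2/4)*(x1^2 + y1^2/r^2)))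
      + (y2 - y1) * (y1 / (r * Real.sqrt (1 + ((1 - r^2)^2/4)*(x1^2 + y1^2/r^2))))
    ≤ (r / ((1 - r^2)^2/4)) *
        (Real.sqrt (1 + ((1 - r^2)^2/4)*(x2^2 + y2^2/r^2))
          - Real.sqrt (1 + ((1 - r^2)^2/4)*(x1^2 + y1^2/r^2))) := by
  set a := (1 - r^2)^2/4 with ha
  have hapos : 0 < a := by
    have h1 : r^2 < 1 := by nlinarith
    have : 0 < 1 - r^2 := by linarith
    positivity
  have hbpos : 0 < a/r^2 := by positivity
  set b := a/r^2 with hb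
  have harg1 : (1 + a*(x1^2 + y1^2/r^2)) = 1 + a*x1^2 + b*y1^2 := by
    rw [hb]; field_simp; ring
  have harg2 : (1 + a*(x2^2 + y2^2/r^2)) = 1 + a*x2^2 + b*y2^2 := by
    rw [hb]; field_simp; ring
  rw [harg1, harg2]
  set W1 := Real.sqrt (1 + a*x1^2 + b*y1^2) with hW1
  set W2 := Real.sqrt (1 + a*x2^2 + b*y2^2) with hW2
  have hW1sq : W1^2 = 1 + a*x1^2 + b*y1^2 := Real.sq_sqrt (by positivity)
  have hW1pos : 0 < W1 := by
    rw [hW1]; apply Real.sqrt_pos.2; positivity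
  have key := flux_cs a b x1 y1 x2 y2 hapos.le hbpos.le
  rw [← hW1, ← hW2] at key
  have h2 : (a*x1*(x2 - x1) + b*y1*(y2 - y1))/W1 ≤ W2 - W1 := by
    rw [div_le_iff₀ hW1pos]; nlinarith
  have h3 : (x2 - x1) * (r * x1 / W1) + (y2 - y1) * (y1 / (r * W1))
      = (r / a) * ((a*x1*(x2 - x1) + b*y1*(y2 - y1))/W1) := by
    rw [hb]; field_simp
  rw [h3]
  exact mul_le_mul_of_nonneg_left h2 (by positivity)

theorem rotational_flux_constant
    (r₀ : ℝ) (hr₀ : 0 < r₀) (hr₀1 : r₀ < 1)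
    (u ur uθ W P Q : ℝ → ℝ → ℝ)
    (hper : ∀ r θ, u r (θ + 2 * Real.pi) = u r θ)
    (hur : ∀ r ∈ Set.Ico r₀ 1, ∀ θ : ℝ,
      HasDerivWithinAt (fun s => u s θ) (ur r θ) (Set.Ico r₀ 1) r)
    (huθ : ∀ r ∈ Set.Ico r₀ 1, ∀ θ : ℝ, HasDerivAt (fun φ => u r φ) (uθ r θ) θ)
    (hW : ∀ r θ, W r θ =
      Real.sqrt (1 + ((1 - r ^ 2) ^ 2 / 4) * ((ur r θ) ^ 2 + (uθ r θ) ^ 2 / r ^ 2)))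
    (hcont : ContinuousOn (fun p : ℝ × ℝ => (ur p.1 p.2, uθ p.1 p.2))
      (Set.Ico r₀ 1 ×ˢ (Set.univ : Set ℝ)))
    (hP : ∀ r ∈ Set.Ico r₀ 1, ∀ θ : ℝ,
      HasDerivWithinAt (fun s => s * ur s θ / W s θ) (P r θ) (Set.Ico r₀ 1) r)
    (hQ : ∀ r ∈ Set.Ico r₀ 1, ∀ θ : ℝ,
      HasDerivAt (fun φ => uθ r φ / (r * W r φ)) (Q r θ) θ)
    (hPcont : ContinuousOn (fun p : ℝ × ℝ => P p.1 p.2)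
      (Set.Ico r₀ 1 ×ˢ (Set.univ : Set ℝ)))
    (hdiv : ∀ r ∈ Set.Ico r₀ 1, ∀ θ : ℝ, P r θ + Q r θ = 0) :
    (∀ r₁ ∈ Set.Ico r₀ 1, ∀ r₂ ∈ Set.Ico r₀ 1,
      (∫ θ in (0:ℝ)..(2 * Real.pi), r₁ * ur r₁ θ * uθ r₁ θ / W r₁ θ)
        = ∫ θ in (0:ℝ)..(2 * Real.pi), r₂ * ur r₂ θ * uθ r₂ θ / W r₂ θ) ∧
    ((∀ r ∈ Set.Icc r₀ 1, ∀ θ : ℝ,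
        HasDerivWithinAt (fun s => u s θ) (ur r θ) (Set.Icc r₀ 1) r) →
      (∀ r ∈ Set.Icc r₀ 1, ∀ θ : ℝ, HasDerivAt (fun φ => u r φ) (uθ r θ) θ) →
      ContinuousOn (fun p : ℝ × ℝ => (ur p.1 p.2, uθ p.1 p.2))
        (Set.Icc r₀ 1 ×ˢ (Set.univ : Set ℝ)) →
      ∀ r ∈ Set.Ico r₀ 1,
        (∫ θ in (0:ℝ)..(2 * Real.pi), r * ur r θ * uθ r θ / W r θ)
          = ∫ θ in (0:ℝ)..(2 * Real.pi), ur 1 θ * uθ 1 θ) := by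
  have twopi_pos : (0:ℝ) < 2 * Real.pi := Real.two_pi_pos
  set S : Set ℝ := Set.Ico r₀ 1 with hS
  -- ## basic facts about W
  have hWarg : ∀ r θ, (0:ℝ) ≤ 1 + ((1 - r ^ 2) ^ 2 / 4) * ((ur r θ) ^ 2 + (uθ r θ) ^ 2 / r ^ 2) := by
    intro r θ; positivity
  have hW1le : ∀ r θ, 1 ≤ W r θ := by
    intro r θ
    rw [hW]
    rw [show (1:ℝ) = Real.sqrt 1 from (Real.sqrt_one).symm]
    apply Real.sqrt_le_sqrt
    have : (0:ℝ) ≤ ((1 - r ^ 2) ^ 2 / 4) * ((ur r θ) ^ 2 + (uθ r θ) ^ 2 / r ^ 2) := by positivity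
    simp only [Real.sqrt_one]
    linarith
  have hWpos : ∀ r θ, 0 < W r θ := fun r θ => lt_of_lt_of_le one_pos (hW1le r θ)
  -- ## unique differentiability and periodicity
  have hUD : UniqueDiffOn ℝ S := uniqueDiffOn_Ico r₀ 1
  have hurper : ∀ r ∈ S, ∀ θ, ur r (θ + 2*Real.pi) = ur r θ := by
    intro r hr θ
    have h1 : HasDerivWithinAt (fun s => u s θ) (ur r (θ + 2*Real.pi)) S r := by
      have h2 := hur r hr (θ + 2*Real.pi)
      have he : (fun s => u s (θ + 2*Real.pi)) = (fun s => u s θ) := by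
        funext s; exact hper s θ
      rwa [he] at h2
    exact (h1.derivWithin (hUD r hr)).symm.trans ((hur r hr θ).derivWithin (hUD r hr))
  have huθper : ∀ r ∈ S, ∀ θ, uθ r (θ + 2*Real.pi) = uθ r θ := by
    intro r hr θ
    have h1 : HasDerivAt (fun φ => u r (φ + 2*Real.pi)) (uθ r (θ + 2*Real.pi)) θ := by
      have h2 := (huθ r hr (θ + 2*Real.pi)).comp θ ((hasDerivAt_id θ).add_const (2*Real.pi))
      simpa [Function.comp_def] using h2
    have he : (fun φ => u r (φ + 2*Real.pi)) = (fun φ => u r φ) := by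
      funext φ; exact hper r φ
    rw [he] at h1
    exact h1.unique (huθ r hr θ)
  have hWper : ∀ r ∈ S, ∀ θ, W r (θ + 2*Real.pi) = W r θ := by
    intro r hr θ; rw [hW, hW, hurper r hr θ, huθper r hr θ]
  -- ## continuity in θ at fixed r ∈ S
  have hpairc : ∀ r ∈ S, Continuous (fun θ => (ur r θ, uθ r θ)) := by
    intro r hr
    have h1 : ContinuousOn ((fun p : ℝ × ℝ => (ur p.1 p.2, uθ p.1 p.2)) ∘ (fun θ : ℝ => (r, θ)))
        Set.univ :=
      hcont.comp (Continuous.continuousOn (continuous_const.prodMk continuous_id))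
        (fun θ _ => ⟨hr, trivial⟩)
    exact continuousOn_univ.1 h1
  have hurc : ∀ r ∈ S, Continuous (fun θ => ur r θ) :=
    fun r hr => (continuous_fst.comp (hpairc r hr))
  have huθc : ∀ r ∈ S, Continuous (fun θ => uθ r θ) :=
    fun r hr => (continuous_snd.comp (hpairc r hr))
  have hWc : ∀ r ∈ S, Continuous (fun θ => W r θ) := by
    intro r hr
    have he : (fun θ => W r θ) = fun θ =>
        Real.sqrt (1 + ((1 - r ^ 2) ^ 2 / 4) * ((ur r θ) ^ 2 + (uθ r θ) ^ 2 / r ^ 2)) := by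
      funext θ; exact hW r θ
    rw [he]
    exact Real.continuous_sqrt.comp (continuous_const.add (continuous_const.mul
      (((hurc r hr).pow 2).add (((huθc r hr).pow 2).div_const _))))
  have huc : ∀ r ∈ S, Continuous (fun θ => u r θ) := by
    intro r hr
    exact continuous_iff_continuousAt.2 (fun θ => (huθ r hr θ).continuousAt)
  have hPc : ∀ r ∈ S, Continuous (fun θ => P r θ) := by
    intro r hr
    have h1 : ContinuousOn ((fun p : ℝ × ℝ => P p.1 p.2) ∘ (fun θ : ℝ => (r, θ))) Set.univ :=
      hPcont.comp (Continuous.continuousOn (continuous_const.prodMk continuous_id))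
        (fun θ _ => ⟨hr, trivial⟩)
    exact continuousOn_univ.1 h1
  have hQeq : ∀ r ∈ S, ∀ θ, Q r θ = -P r θ := by
    intro r hr θ; have := hdiv r hr θ; linarith
  have hQc : ∀ r ∈ S, Continuous (fun θ => Q r θ) := by
    intro r hr
    have he : (fun θ => Q r θ) = fun θ => -P r θ := by funext θ; exact hQeq r hr θ
    rw [he]; exact (hPc r hr).neg
  have hAc : ∀ r ∈ S, Continuous (fun θ => r * ur r θ / W r θ) := by
    intro r hr
    exact (continuous_const.mul (hurc r hr)).div (hWc r hr) (fun θ => (hWpos r θ).ne')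
  -- shifted continuity helper
  have hshift : ∀ (f : ℝ → ℝ) (h : ℝ), Continuous f → Continuous (fun θ : ℝ => f (θ + h)) :=
    fun f h hf => hf.comp (continuous_id.add continuous_const)
  -- ## step: the periodic shift integral identity for W
  have hWshift : ∀ x ∈ S, ∀ h : ℝ,
      (∫ θ in (0:ℝ)..(2*Real.pi), W x (θ + h)) = ∫ θ in (0:ℝ)..(2*Real.pi), W x θ := by
    intro x hx h
    have hp : Function.Periodic (fun t => W x t) (2*Real.pi) := fun t => hWper x hx t
    calc (∫ θ in (0:ℝ)..(2*Real.pi), W x (θ + h))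
        = ∫ t in (0+h)..(2*Real.pi + h), W x t := intervalIntegral.integral_comp_add_right _ h
      _ = ∫ t in (0+h)..((0+h) + 2*Real.pi), W x t := by congr 1; ring
      _ = ∫ t in (0:ℝ)..(0 + 2*Real.pi), W x t := hp.intervalIntegral_add_eq (0+h) 0
      _ = ∫ t in (0:ℝ)..(2*Real.pi), W x t := by congr 1; ring
  -- ## step: integration by parts in θ (swap lemma)
  have hswap : ∀ x ∈ S, ∀ h : ℝ,
      (∫ θ in (0:ℝ)..(2*Real.pi), (u x (θ + h) - u x θ) * P x θ)
        = ∫ θ in (0:ℝ)..(2*Real.pi), (uθ x (θ + h) - uθ x θ) * (uθ x θ / (x * W x θ)) := by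
    intro x hx h
    have hxpos : 0 < x := lt_of_lt_of_le hr₀ hx.1
    set g : ℝ → ℝ := fun θ => (u x (θ + h) - u x θ) * (uθ x θ / (x * W x θ)) with hg
    set g' : ℝ → ℝ := fun θ =>
      (uθ x (θ + h) - uθ x θ) * (uθ x θ / (x * W x θ)) + (u x (θ + h) - u x θ) * Q x θ with hg'
    have hgd : ∀ θ, HasDerivAt g (g' θ) θ := by
      intro θ
      have h1 : HasDerivAt (fun t => u x (t + h)) (uθ x (θ + h)) θ := by
        have h2 := (huθ x hx (θ + h)).comp θ ((hasDerivAt_id θ).add_const h)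
        simpa [Function.comp_def] using h2
      exact (h1.sub (huθ x hx θ)).mul (hQ x hx θ)
    have hBc : Continuous (fun θ => uθ x θ / (x * W x θ)) :=
      (huθc x hx).div (continuous_const.mul (hWc x hx))
        (fun θ => (mul_pos hxpos (hWpos x θ)).ne')
    have hg'c : Continuous g' :=
      (((hshift _ h (huθc x hx)).sub (huθc x hx)).mul hBc).add
        (((hshift _ h (huc x hx)).sub (huc x hx)).mul (hQc x hx))
    have hFTC : (∫ θ in (0:ℝ)..(2*Real.pi), g' θ) = g (2*Real.pi) - g 0 :=
      intervalIntegral.integral_eq_sub_of_hasDerivAt (fun θ _ => hgd θ)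
        (hg'c.intervalIntegrable 0 (2*Real.pi))
    have hper2 : g (2*Real.pi) = g 0 := by
      have e1 : u x (2*Real.pi + h) = u x (0 + h) := by
        rw [add_comm (2*Real.pi) h, hper x h, zero_add]
      have e2 : u x (2*Real.pi) = u x 0 := by
        have := hper x 0; rwa [zero_add] at this
      have e3 : uθ x (2*Real.pi) = uθ x 0 := by
        have := huθper x hx 0; rwa [zero_add] at this
      have e4 : W x (2*Real.pi) = W x 0 := by
        have := hWper x hx 0; rwa [zero_add] at this
      simp only [hg, e1, e2, e3, e4, zero_add]
    rw [hper2, sub_self] at hFTC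
    have hi1 : IntervalIntegrable (fun θ => (uθ x (θ + h) - uθ x θ) * (uθ x θ / (x * W x θ)))
        volume 0 (2*Real.pi) :=
      (((hshift _ h (huθc x hx)).sub (huθc x hx)).mul hBc).intervalIntegrable _ _
    have hi2 : IntervalIntegrable (fun θ => (u x (θ + h) - u x θ) * Q x θ) volume 0 (2*Real.pi) :=
      (((hshift _ h (huc x hx)).sub (huc x hx)).mul (hQc x hx)).intervalIntegrable _ _
    have hsplit : (∫ θ in (0:ℝ)..(2*Real.pi), g' θ)
        = (∫ θ in (0:ℝ)..(2*Real.pi), (uθ x (θ + h) - uθ x θ) * (uθ x θ / (x * W x θ)))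
          + ∫ θ in (0:ℝ)..(2*Real.pi), (u x (θ + h) - u x θ) * Q x θ :=
      intervalIntegral.integral_add hi1 hi2
    have hQrw : (∫ θ in (0:ℝ)..(2*Real.pi), (u x (θ + h) - u x θ) * Q x θ)
        = - ∫ θ in (0:ℝ)..(2*Real.pi), (u x (θ + h) - u x θ) * P x θ := by
      rw [← intervalIntegral.integral_neg]
      apply intervalIntegral.integral_congr
      intro θ _
      show (u x (θ + h) - u x θ) * Q x θ = -((u x (θ + h) - u x θ) * P x θ)
      rw [hQeq x hx θ]; ring
    rw [hsplit, hQrw] at hFTC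
    linarith
  -- ## step: nonpositivity of the derivative integrand integral
  have hDle : ∀ x ∈ S, ∀ h : ℝ,
      (∫ θ in (0:ℝ)..(2*Real.pi),
        ((ur x (θ + h) - ur x θ) * (x * ur x θ / W x θ) + (u x (θ + h) - u x θ) * P x θ)) ≤ 0 := by
    intro x hx h
    have hxpos : 0 < x := lt_of_lt_of_le hr₀ hx.1
    have hx1 : x < 1 := hx.2
    have hiA : IntervalIntegrable (fun θ => (ur x (θ + h) - ur x θ) * (x * ur x θ / W x θ))
        volume 0 (2*Real.pi) :=
      (((hshift _ h (hurc x hx)).sub (hurc x hx)).mul (hAc x hx)).intervalIntegrable _ _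
    have hiP : IntervalIntegrable (fun θ => (u x (θ + h) - u x θ) * P x θ) volume 0 (2*Real.pi) :=
      (((hshift _ h (huc x hx)).sub (huc x hx)).mul (hPc x hx)).intervalIntegrable _ _
    have hBc : Continuous (fun θ => uθ x θ / (x * W x θ)) :=
      (huθc x hx).div (continuous_const.mul (hWc x hx))
        (fun θ => (mul_pos hxpos (hWpos x θ)).ne')
    have hiB : IntervalIntegrable (fun θ => (uθ x (θ + h) - uθ x θ) * (uθ x θ / (x * W x θ)))
        volume 0 (2*Real.pi) :=
      (((hshift _ h (huθc x hx)).sub (huθc x hx)).mul hBc).intervalIntegrable _ _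
    rw [intervalIntegral.integral_add hiA hiP, hswap x hx h,
      ← intervalIntegral.integral_add hiA hiB]
    have hcomp : (∫ θ in (0:ℝ)..(2*Real.pi),
        ((ur x (θ + h) - ur x θ) * (x * ur x θ / W x θ)
          + (uθ x (θ + h) - uθ x θ) * (uθ x θ / (x * W x θ))))
        ≤ ∫ θ in (0:ℝ)..(2*Real.pi), (x / ((1 - x^2)^2/4)) * (W x (θ + h) - W x θ) := by
      apply intervalIntegral.integral_mono_on twopi_pos.le (hiA.add hiB)
        ((continuous_const.mul ((hshift _ h (hWc x hx)).sub (hWc x hx))).intervalIntegrable _ _)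
      intro θ _
      have hpt := flux_pt x (ur x θ) (uθ x θ) (ur x (θ + h)) (uθ x (θ + h)) hxpos hx1
      rw [← hW x θ, ← hW x (θ + h)] at hpt
      exact hpt
    have hzero : (∫ θ in (0:ℝ)..(2*Real.pi), (x / ((1 - x^2)^2/4)) * (W x (θ + h) - W x θ)) = 0 := by
      rw [intervalIntegral.integral_const_mul,
        intervalIntegral.integral_sub ((hshift _ h (hWc x hx)).intervalIntegrable _ _)
          ((hWc x hx).intervalIntegrable _ _),
        hWshift x hx h]
      ring
    linarith
  -- ## step: limit of difference quotients
  have hlim : ∀ r ∈ S, ∀ e : ℕ → ℝ, (∀ n, e n ≠ 0) → (∀ n, |e n| ≤ 1) →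
      Tendsto e atTop (𝓝 0) →
      Tendsto (fun n => (e n)⁻¹ *
          ∫ θ in (0:ℝ)..(2*Real.pi), (u r (θ + e n) - u r θ) * (r * ur r θ / W r θ))
        atTop (𝓝 (∫ θ in (0:ℝ)..(2*Real.pi), r * ur r θ * uθ r θ / W r θ)) := by
    intro r hr e he0 he1 het
    obtain ⟨Cθ, hCθ⟩ := (isCompact_Icc (a := -(1:ℝ)) (b := 2*Real.pi + 1)).exists_bound_of_continuousOn
      ((huθc r hr).continuousOn)
    obtain ⟨CA, hCA⟩ := (isCompact_Icc (a := (0:ℝ)) (b := 2*Real.pi)).exists_bound_of_continuousOn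
      ((hAc r hr).continuousOn)
    have hCθ0 : 0 ≤ Cθ := le_trans (norm_nonneg _)
      (hCθ 0 ⟨by norm_num, by positivity⟩)
    have hCA0 : 0 ≤ CA := le_trans (norm_nonneg _) (hCA 0 ⟨le_refl 0, twopi_pos.le⟩)
    have hrw : (fun n => (e n)⁻¹ *
          ∫ θ in (0:ℝ)..(2*Real.pi), (u r (θ + e n) - u r θ) * (r * ur r θ / W r θ))
        = fun n => ∫ θ in (0:ℝ)..(2*Real.pi),
            (e n)⁻¹ * ((u r (θ + e n) - u r θ) * (r * ur r θ / W r θ)) := by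
      funext n; rw [intervalIntegral.integral_const_mul]
    have htgt : (∫ θ in (0:ℝ)..(2*Real.pi), r * ur r θ * uθ r θ / W r θ)
        = ∫ θ in (0:ℝ)..(2*Real.pi), uθ r θ * (r * ur r θ / W r θ) := by
      apply intervalIntegral.integral_congr
      intro θ _
      show r * ur r θ * uθ r θ / W r θ = uθ r θ * (r * ur r θ / W r θ)
      ring
    rw [hrw, htgt]
    apply intervalIntegral.tendsto_integral_filter_of_dominated_convergence
      (bound := fun _ => Cθ * CA)
    · apply Eventually.of_forall
      intro n
      exact (continuous_const.mul (((hshift _ (e n) (huc r hr)).sub (huc r hr)).mul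
        (hAc r hr))).aestronglyMeasurable
    · apply Eventually.of_forall
      intro n
      apply MeasureTheory.ae_of_all
      intro θ hθ
      have hθ' : θ ∈ Set.Icc (0:ℝ) (2*Real.pi) := by
        rw [Set.uIoc_of_le twopi_pos.le] at hθ; exact ⟨hθ.1.le, hθ.2⟩
      have hen := abs_le.1 (he1 n)
      have hΔ : |u r (θ + e n) - u r θ| ≤ Cθ * |e n| := by
        have hFTCu : u r (θ + e n) - u r θ = ∫ t in θ..(θ + e n), uθ r t := by
          rw [intervalIntegral.integral_eq_sub_of_hasDerivAt
            (fun t _ => huθ r hr t) ((huθc r hr).intervalIntegrable _ _)]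
        rw [hFTCu, ← Real.norm_eq_abs]
        have hb : ∀ t ∈ Set.uIoc θ (θ + e n), ‖uθ r t‖ ≤ Cθ := by
          intro t ht
          apply hCθ
          constructor
          · have h5 : -(1:ℝ) ≤ min θ (θ + e n) :=
              le_min (by linarith [hθ'.1]) (by linarith [hθ'.1, hen.1])
            exact le_trans h5 ht.1.le
          · have h6 : max θ (θ + e n) ≤ 2*Real.pi + 1 :=
              max_le (by linarith [hθ'.2]) (by linarith [hθ'.2, hen.2])
            exact le_trans ht.2 h6
        calc ‖∫ t in θ..(θ + e n), uθ r t‖ ≤ Cθ * |(θ + e n) - θ| :=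
              intervalIntegral.norm_integral_le_of_norm_le_const hb
          _ = Cθ * |e n| := by rw [add_sub_cancel_left]
      have hA : |r * ur r θ / W r θ| ≤ CA := by
        rw [← Real.norm_eq_abs]; exact hCA θ hθ'
      have hepos : (0:ℝ) < |e n| := abs_pos.2 (he0 n)
      rw [Real.norm_eq_abs]
      calc |(e n)⁻¹ * ((u r (θ + e n) - u r θ) * (r * ur r θ / W r θ))|
          = |e n|⁻¹ * (|u r (θ + e n) - u r θ| * |r * ur r θ / W r θ|) := by
            rw [abs_mul, abs_inv, abs_mul]
        _ ≤ |e n|⁻¹ * ((Cθ * |e n|) * CA) := by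
            apply mul_le_mul_of_nonneg_left _ (inv_nonneg.2 (abs_nonneg _))
            exact mul_le_mul hΔ hA (abs_nonneg _) (by positivity)
        _ = Cθ * CA := by field_simp
    · exact intervalIntegrable_const
    · apply MeasureTheory.ae_of_all
      intro θ _
      have hslope := (huθ r hr θ).tendsto_slope_zero
      have henb : Tendsto e atTop (𝓝[≠] 0) :=
        tendsto_nhdsWithin_of_tendsto_nhds_of_eventually_within e het
          (Eventually.of_forall (fun n => he0 n))
      have h1 : Tendsto (fun n => (e n)⁻¹ * (u r (θ + e n) - u r θ)) atTop (𝓝 (uθ r θ)) := by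
        have h2 := hslope.comp henb
        simpa [Function.comp_def] using h2
      have h3 := h1.mul_const (r * ur r θ / W r θ)
      simpa [mul_assoc] using h3
  -- ## main monotone comparison
  have key : ∀ r₁ ∈ S, ∀ r₂ ∈ S, r₁ ≤ r₂ →
      (∫ θ in (0:ℝ)..(2 * Real.pi), r₁ * ur r₁ θ * uθ r₁ θ / W r₁ θ)
        = ∫ θ in (0:ℝ)..(2 * Real.pi), r₂ * ur r₂ θ * uθ r₂ θ / W r₂ θ := by
    intro r₁ hr₁ r₂ hr₂ hle
    have habs_sub : ∀ a b : ℝ, |a - b| ≤ |a| + |b| := fun a b => by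
      rw [sub_eq_add_neg]
      simpa using abs_add_le a (-b)
    set rm : ℝ := (1 + r₂)/2 with hrm
    have hr₂1 : r₂ < 1 := hr₂.2
    have hr₂m : r₂ < rm := by rw [hrm]; linarith
    have hrm1 : rm < 1 := by rw [hrm]; linarith
    have hSmS : Set.Icc r₀ rm ⊆ S := fun y hy => ⟨hy.1, lt_of_le_of_lt hy.2 hrm1⟩
    have hGle : ∀ h : ℝ,
        (∫ θ in (0:ℝ)..(2*Real.pi), (u r₂ (θ + h) - u r₂ θ) * (r₂ * ur r₂ θ / W r₂ θ))
          ≤ ∫ θ in (0:ℝ)..(2*Real.pi), (u r₁ (θ + h) - u r₁ θ) * (r₁ * ur r₁ θ / W r₁ θ) := by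
      intro h
      set lo : ℝ := -(|h| + 1) with hlo
      set hi : ℝ := 2*Real.pi + |h| + 1 with hhi
      set K : Set (ℝ × ℝ) := Set.Icc r₀ rm ×ˢ Set.Icc lo hi with hK
      have hKc : IsCompact K := isCompact_Icc.prod isCompact_Icc
      have hKsub : K ⊆ S ×ˢ Set.univ := fun p hp => ⟨hSmS hp.1, trivial⟩
      obtain ⟨Cu, hCu⟩ := hKc.exists_bound_of_continuousOn
        ((continuous_fst.comp_continuousOn hcont).mono hKsub)
      obtain ⟨Cθ, hCθ⟩ := hKc.exists_bound_of_continuousOn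
        ((continuous_snd.comp_continuousOn hcont).mono hKsub)
      obtain ⟨CP, hCP⟩ := hKc.exists_bound_of_continuousOn (hPcont.mono hKsub)
      have habs0 : 0 ≤ |h| := abs_nonneg h
      have hbase : ((r₀ : ℝ), (0:ℝ)) ∈ K := by
        refine ⟨⟨le_refl r₀, le_trans (le_trans hr₁.1 hle) hr₂m.le⟩, ⟨?_, ?_⟩⟩
        · show lo ≤ (0:ℝ); rw [hlo]; linarith
        · show (0:ℝ) ≤ hi; rw [hhi]; linarith
      have hCu0 : 0 ≤ Cu := le_trans (norm_nonneg _) (hCu _ hbase)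
      have hCθ0 : 0 ≤ Cθ := le_trans (norm_nonneg _) (hCθ _ hbase)
      have hCP0 : 0 ≤ CP := le_trans (norm_nonneg _) (hCP _ hbase)
      set C : ℝ := (Cu + Cu) * Cu + (Cθ * |h|) * CP with hC
      have hΔu : ∀ y ∈ Set.Icc r₀ rm, ∀ θ ∈ Set.Icc (0:ℝ) (2*Real.pi),
          |u y (θ + h) - u y θ| ≤ Cθ * |h| := by
        intro y hy θ hθ
        have hyS : y ∈ S := hSmS hy
        have hFTCu : u y (θ + h) - u y θ = ∫ t in θ..(θ + h), uθ y t := by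
          rw [intervalIntegral.integral_eq_sub_of_hasDerivAt
            (fun t _ => huθ y hyS t) ((huθc y hyS).intervalIntegrable _ _)]
        rw [hFTCu, ← Real.norm_eq_abs]
        have habsh := abs_le.1 (le_refl |h|)
        have hb : ∀ t ∈ Set.uIoc θ (θ + h), ‖uθ y t‖ ≤ Cθ := by
          intro t ht
          apply hCθ (y, t)
          refine ⟨hy, ⟨?_, ?_⟩⟩
          · have h5 : lo ≤ min θ (θ + h) := by
              apply le_min
              · rw [hlo]; linarith [hθ.1]
              · rw [hlo]; linarith [hθ.1, neg_abs_le h]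
            exact le_trans h5 ht.1.le
          · have h6 : max θ (θ + h) ≤ hi := by
              apply max_le
              · rw [hhi]; linarith [hθ.2]
              · rw [hhi]; linarith [hθ.2, le_abs_self h]
            exact le_trans ht.2 h6
        calc ‖∫ t in θ..(θ + h), uθ y t‖ ≤ Cθ * |(θ + h) - θ| :=
              intervalIntegral.norm_integral_le_of_norm_le_const hb
          _ = Cθ * |h| := by rw [add_sub_cancel_left]
      have hmemθ : ∀ θ ∈ Set.Icc (0:ℝ) (2*Real.pi), θ ∈ Set.Icc lo hi := by
        intro θ hθ
        constructor
        · rw [hlo]; linarith [hθ.1]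
        · rw [hhi]; linarith [hθ.2]
      have hmemθh : ∀ θ ∈ Set.Icc (0:ℝ) (2*Real.pi), θ + h ∈ Set.Icc lo hi := by
        intro θ hθ
        constructor
        · rw [hlo]; linarith [hθ.1, neg_abs_le h]
        · rw [hhi]; linarith [hθ.2, le_abs_self h]
      have hΦbd : ∀ y ∈ Set.Icc r₀ rm, ∀ θ ∈ Set.Icc (0:ℝ) (2*Real.pi),
          ‖(ur y (θ + h) - ur y θ) * (y * ur y θ / W y θ)
            + (u y (θ + h) - u y θ) * P y θ‖ ≤ C := by
        intro y hy θ hθ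
        have b1 : |ur y (θ + h)| ≤ Cu := by
          rw [← Real.norm_eq_abs]; exact hCu (y, θ + h) ⟨hy, hmemθh θ hθ⟩
        have b2 : |ur y θ| ≤ Cu := by
          rw [← Real.norm_eq_abs]; exact hCu (y, θ) ⟨hy, hmemθ θ hθ⟩
        have bP : |P y θ| ≤ CP := by
          rw [← Real.norm_eq_abs]; exact hCP (y, θ) ⟨hy, hmemθ θ hθ⟩
        have bΔ := hΔu y hy θ hθ
        have bA : |y * ur y θ / W y θ| ≤ Cu := by
          have h7 : |y * ur y θ / W y θ| ≤ |y * ur y θ| := by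
            rw [abs_div, abs_of_pos (hWpos y θ)]
            exact div_le_self (abs_nonneg _) (hW1le y θ)
          refine h7.trans ?_
          rw [abs_mul]
          have hy1 : |y| ≤ 1 := by
            rw [abs_of_pos (lt_of_lt_of_le hr₀ hy.1)]
            exact le_trans hy.2 hrm1.le
          calc |y| * |ur y θ| ≤ 1 * Cu :=
                mul_le_mul hy1 b2 (abs_nonneg _) zero_le_one
            _ = Cu := one_mul _
        rw [Real.norm_eq_abs]
        calc |(ur y (θ + h) - ur y θ) * (y * ur y θ / W y θ)
              + (u y (θ + h) - u y θ) * P y θ|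
            ≤ |(ur y (θ + h) - ur y θ) * (y * ur y θ / W y θ)|
              + |(u y (θ + h) - u y θ) * P y θ| := abs_add_le _ _
          _ = |ur y (θ + h) - ur y θ| * |y * ur y θ / W y θ|
              + |u y (θ + h) - u y θ| * |P y θ| := by rw [abs_mul, abs_mul]
          _ ≤ (Cu + Cu) * Cu + (Cθ * |h|) * CP := by
              apply add_le_add
              · exact mul_le_mul ((habs_sub _ _).trans (add_le_add b1 b2)) bA
                  (abs_nonneg _) (by positivity)
              · exact mul_le_mul bΔ bP (abs_nonneg _) (by positivity)
          _ = C := by rw [hC]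
      have hΦd : ∀ θ : ℝ, ∀ y ∈ Set.Icc r₀ rm,
          HasDerivWithinAt (fun s => (u s (θ + h) - u s θ) * (s * ur s θ / W s θ))
            ((ur y (θ + h) - ur y θ) * (y * ur y θ / W y θ) + (u y (θ + h) - u y θ) * P y θ)
            (Set.Icc r₀ rm) y := by
        intro θ y hy
        have hyS : y ∈ S := hSmS hy
        exact (((hur y hyS (θ + h)).sub (hur y hyS θ)).mul (hP y hyS θ)).mono hSmS
      have hΦc : ∀ y ∈ S, Continuous
          (fun θ => (u y (θ + h) - u y θ) * (y * ur y θ / W y θ)) :=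
        fun y hy => ((hshift _ h (huc y hy)).sub (huc y hy)).mul (hAc y hy)
      set G : ℝ → ℝ := fun y => ∫ θ in (0:ℝ)..(2*Real.pi),
        (u y (θ + h) - u y θ) * (y * ur y θ / W y θ) with hGdef
      have hGlip : ∀ y ∈ Set.Icc r₀ rm, ∀ z ∈ Set.Icc r₀ rm,
          |G z - G y| ≤ C * |z - y| * (2*Real.pi) := by
        intro y hy z hz
        have h1 : G z - G y = ∫ θ in (0:ℝ)..(2*Real.pi),
            ((u z (θ + h) - u z θ) * (z * ur z θ / W z θ)
              - (u y (θ + h) - u y θ) * (y * ur y θ / W y θ)) := by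
          rw [hGdef]
          rw [intervalIntegral.integral_sub ((hΦc z (hSmS hz)).intervalIntegrable _ _)
            ((hΦc y (hSmS hy)).intervalIntegrable _ _)]
        rw [← Real.norm_eq_abs, h1]
        have hb : ∀ t ∈ Set.uIoc (0:ℝ) (2*Real.pi),
            ‖(u z (t + h) - u z t) * (z * ur z t / W z t)
              - (u y (t + h) - u y t) * (y * ur y t / W y t)‖ ≤ C * |z - y| := by
          intro t ht
          have ht' : t ∈ Set.Icc (0:ℝ) (2*Real.pi) := by
            rw [Set.uIoc_of_le twopi_pos.le] at ht; exact ⟨ht.1.le, ht.2⟩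
          have := Convex.norm_image_sub_le_of_norm_hasDerivWithin_le
            (f := fun s => (u s (t + h) - u s t) * (s * ur s t / W s t))
            (f' := fun s => (ur s (t + h) - ur s t) * (s * ur s t / W s t)
              + (u s (t + h) - u s t) * P s t)
            (fun s hs => hΦd t s hs) (fun s hs => hΦbd s hs t ht')
            (convex_Icc r₀ rm) hy hz
          calc ‖(u z (t + h) - u z t) * (z * ur z t / W z t)
                - (u y (t + h) - u y t) * (y * ur y t / W y t)‖
              ≤ C * ‖z - y‖ := this
            _ = C * |z - y| := by rw [Real.norm_eq_abs]
        calc ‖∫ θ in (0:ℝ)..(2*Real.pi),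
              ((u z (θ + h) - u z θ) * (z * ur z θ / W z θ)
                - (u y (θ + h) - u y θ) * (y * ur y θ / W y θ))‖
            ≤ (C * |z - y|) * |2*Real.pi - 0| :=
              intervalIntegral.norm_integral_le_of_norm_le_const hb
          _ = C * |z - y| * (2*Real.pi) := by
              rw [sub_zero, abs_of_pos twopi_pos]
      have hGcont : ContinuousOn G (Set.Icc r₀ rm) := by
        have hlipOn : LipschitzOnWith (Real.toNNReal (C * (2*Real.pi))) G (Set.Icc r₀ rm) := by
          apply LipschitzOnWith.of_dist_le_mul
          intro y hy z hz
          rw [Real.dist_eq, Real.dist_eq]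
          calc |G y - G z| ≤ C * |y - z| * (2*Real.pi) := hGlip z hz y hy
            _ = (C * (2*Real.pi)) * |y - z| := by ring
            _ ≤ Real.toNNReal (C * (2*Real.pi)) * |y - z| :=
                mul_le_mul_of_nonneg_right (Real.le_coe_toNNReal _) (abs_nonneg _)
        exact hlipOn.continuousOn
      have hGd : ∀ y ∈ Set.Ioo r₀ rm, HasDerivAt G
          (∫ θ in (0:ℝ)..(2*Real.pi),
            ((ur y (θ + h) - ur y θ) * (y * ur y θ / W y θ)
              + (u y (θ + h) - u y θ) * P y θ)) y := by
        intro y hy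
        have hyS : y ∈ S := hSmS (Set.Ioo_subset_Icc_self hy)
        set ε : ℝ := min (y - r₀) (rm - y) with hε
        have hεpos : 0 < ε := lt_min (by linarith [hy.1]) (by linarith [hy.2])
        have hball : Metric.ball y ε ⊆ Set.Ioo r₀ rm := by
          intro z hz
          rw [Metric.mem_ball, Real.dist_eq] at hz
          have h1 := abs_lt.1 hz
          constructor
          · have h2 := min_le_left (y - r₀) (rm - y); rw [← hε] at h2; linarith [h1.1]
          · have h2 := min_le_right (y - r₀) (rm - y); rw [← hε] at h2; linarith [h1.2]
        refine (intervalIntegral.hasDerivAt_integral_of_dominated_loc_of_deriv_le (𝕜 := ℝ)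
          (F := fun z θ => (u z (θ + h) - u z θ) * (z * ur z θ / W z θ))
          (F' := fun z θ => (ur z (θ + h) - ur z θ) * (z * ur z θ / W z θ)
            + (u z (θ + h) - u z θ) * P z θ)
          (bound := fun _ => C) (Metric.ball_mem_nhds y hεpos) ?_ ?_ ?_ ?_ ?_ ?_).2
        · filter_upwards [isOpen_Ioo.mem_nhds hy] with z hz
          exact (hΦc z (hSmS (Set.Ioo_subset_Icc_self hz))).aestronglyMeasurable
        · exact (hΦc y hyS).intervalIntegrable _ _
        · exact ((((hshift _ h (hurc y hyS)).sub (hurc y hyS)).mul (hAc y hyS)).add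
            (((hshift _ h (huc y hyS)).sub (huc y hyS)).mul (hPc y hyS))).aestronglyMeasurable
        · apply MeasureTheory.ae_of_all
          intro t ht z hz
          have ht' : t ∈ Set.Icc (0:ℝ) (2*Real.pi) := by
            rw [Set.uIoc_of_le twopi_pos.le] at ht; exact ⟨ht.1.le, ht.2⟩
          exact hΦbd z (Set.Ioo_subset_Icc_self (hball hz)) t ht'
        · exact intervalIntegrable_const
        · apply MeasureTheory.ae_of_all
          intro t _ z hz
          have hz' : z ∈ Set.Ioo r₀ rm := hball hz
          exact (hΦd t z (Set.Ioo_subset_Icc_self hz')).hasDerivAt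
            (Icc_mem_nhds hz'.1 hz'.2)
      have hIccsub : Set.Icc r₁ r₂ ⊆ Set.Icc r₀ rm := Set.Icc_subset_Icc hr₁.1 hr₂m.le
      have hanti : AntitoneOn G (Set.Icc r₁ r₂) := by
        apply antitoneOn_of_deriv_nonpos (convex_Icc r₁ r₂) (hGcont.mono hIccsub)
        · intro y hy
          rw [interior_Icc] at hy
          have hy' : y ∈ Set.Ioo r₀ rm := ⟨lt_of_le_of_lt hr₁.1 hy.1, lt_trans hy.2 hr₂m⟩
          exact (hGd y hy').differentiableAt.differentiableWithinAt
        · intro y hy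
          rw [interior_Icc] at hy
          have hy' : y ∈ Set.Ioo r₀ rm := ⟨lt_of_le_of_lt hr₁.1 hy.1, lt_trans hy.2 hr₂m⟩
          rw [(hGd y hy').deriv]
          exact hDle y (hSmS (Set.Ioo_subset_Icc_self hy')) h
      exact hanti (Set.left_mem_Icc.2 hle) (Set.right_mem_Icc.2 hle) hle
    -- positive difference quotients
    have hseq : ∀ n : ℕ, (0:ℝ) < 1/((n:ℝ)+1) := fun n => by positivity
    have hseqne : ∀ n : ℕ, (1:ℝ)/((n:ℝ)+1) ≠ 0 := fun n => (hseq n).ne'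
    have hseqle : ∀ n : ℕ, |(1:ℝ)/((n:ℝ)+1)| ≤ 1 := by
      intro n
      rw [abs_of_pos (hseq n), div_le_one (by positivity)]
      linarith [Nat.cast_nonneg (α := ℝ) n]
    have hseqt : Tendsto (fun n : ℕ => (1:ℝ)/((n:ℝ)+1)) atTop (𝓝 0) :=
      tendsto_one_div_add_atTop_nhds_zero_nat
    have hseqne' : ∀ n : ℕ, -((1:ℝ)/((n:ℝ)+1)) ≠ 0 := fun n => neg_ne_zero.2 (hseqne n)
    have hseqle' : ∀ n : ℕ, |-((1:ℝ)/((n:ℝ)+1))| ≤ 1 := by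
      intro n; rw [abs_neg]; exact hseqle n
    have hseqt' : Tendsto (fun n : ℕ => -((1:ℝ)/((n:ℝ)+1))) atTop (𝓝 0) := by
      have := hseqt.neg; simpa using this
    have lim1 := hlim r₁ hr₁ _ hseqne hseqle hseqt
    have lim2 := hlim r₂ hr₂ _ hseqne hseqle hseqt
    have lim3 := hlim r₁ hr₁ _ hseqne' hseqle' hseqt'
    have lim4 := hlim r₂ hr₂ _ hseqne' hseqle' hseqt'
    have hle1 : (∫ θ in (0:ℝ)..(2 * Real.pi), r₂ * ur r₂ θ * uθ r₂ θ / W r₂ θ)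
        ≤ ∫ θ in (0:ℝ)..(2 * Real.pi), r₁ * ur r₁ θ * uθ r₁ θ / W r₁ θ := by
      apply le_of_tendsto_of_tendsto' lim2 lim1
      intro n
      exact mul_le_mul_of_nonneg_left (hGle _) (inv_nonneg.2 (hseq n).le)
    have hle2 : (∫ θ in (0:ℝ)..(2 * Real.pi), r₁ * ur r₁ θ * uθ r₁ θ / W r₁ θ)
        ≤ ∫ θ in (0:ℝ)..(2 * Real.pi), r₂ * ur r₂ θ * uθ r₂ θ / W r₂ θ := by
      apply le_of_tendsto_of_tendsto' lim3 lim4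
      intro n
      have hneg : (-((1:ℝ)/((n:ℝ)+1)))⁻¹ ≤ 0 := by
        rw [inv_nonpos]
        linarith [hseq n]
      exact mul_le_mul_of_nonpos_left (hGle _) hneg
    exact le_antisymm hle2 hle1
  constructor
  · intro r₁ h1 r₂ h2
    rcases le_total r₁ r₂ with h | h
    · exact key r₁ h1 r₂ h2 h
    · exact (key r₂ h2 r₁ h1 h).symm
  · intro hur' huθ' hcont' r hr
    set K2 : Set (ℝ × ℝ) := Set.Icc r₀ 1 ×ˢ Set.Icc (0:ℝ) (2*Real.pi) with hK2
    have hK2c : IsCompact K2 := isCompact_Icc.prod isCompact_Icc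
    have hK2sub : K2 ⊆ Set.Icc r₀ 1 ×ˢ Set.univ := fun p hp => ⟨hp.1, trivial⟩
    obtain ⟨Cu, hCu⟩ := hK2c.exists_bound_of_continuousOn
      ((continuous_fst.comp_continuousOn hcont').mono hK2sub)
    obtain ⟨Cθ, hCθ⟩ := hK2c.exists_bound_of_continuousOn
      ((continuous_snd.comp_continuousOn hcont').mono hK2sub)
    have hbase2 : ((r₀:ℝ), (0:ℝ)) ∈ K2 :=
      ⟨⟨le_refl r₀, hr₀1.le⟩, ⟨le_refl 0, twopi_pos.le⟩⟩
    have hCu0 : 0 ≤ Cu := le_trans (norm_nonneg _) (hCu _ hbase2)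
    have hCθ0 : 0 ≤ Cθ := le_trans (norm_nonneg _) (hCθ _ hbase2)
    set e : ℕ → ℝ := fun n => 1 - (1 - r₀)/((n:ℝ)+2) with he
    have heS : ∀ n, e n ∈ S := by
      intro n
      constructor
      · have h1 : (1 - r₀)/((n:ℝ)+2) ≤ 1 - r₀ := by
          apply div_le_self (by linarith)
          have := Nat.cast_nonneg (α := ℝ) n
          linarith
        show r₀ ≤ 1 - (1 - r₀)/((n:ℝ)+2)
        linarith
      · have h1 : 0 < (1 - r₀)/((n:ℝ)+2) := div_pos (by linarith) (by positivity)
        show 1 - (1 - r₀)/((n:ℝ)+2) < 1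
        linarith
    have hepos : ∀ n, 0 < e n := fun n => lt_of_lt_of_le hr₀ (heS n).1
    have hele : ∀ n, e n ≤ 1 := fun n => (heS n).2.le
    have hetend : Tendsto e atTop (𝓝 1) := by
      have h0 : Tendsto (fun n : ℕ => (1 - r₀)/((n:ℝ)+2)) atTop (𝓝 0) :=
        Tendsto.div_atTop tendsto_const_nhds
          (tendsto_atTop_add_const_right atTop 2 tendsto_natCast_atTop_atTop)
      have h1 := (tendsto_const_nhds (x := (1:ℝ)) (f := atTop)).sub h0
      simpa using h1
    have hFeq : ∀ n, (∫ θ in (0:ℝ)..(2*Real.pi), r * ur r θ * uθ r θ / W r θ)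
        = ∫ θ in (0:ℝ)..(2*Real.pi), (e n) * ur (e n) θ * uθ (e n) θ / W (e n) θ := by
      intro n
      rcases le_total r (e n) with hc | hc
      · exact key r hr (e n) (heS n) hc
      · exact (key (e n) (heS n) r hr hc).symm
    have hlim2 : Tendsto (fun n => ∫ θ in (0:ℝ)..(2*Real.pi),
        (e n) * ur (e n) θ * uθ (e n) θ / W (e n) θ) atTop
        (𝓝 (∫ θ in (0:ℝ)..(2*Real.pi), ur 1 θ * uθ 1 θ)) := by
      apply intervalIntegral.tendsto_integral_filter_of_dominated_convergence
        (bound := fun _ => Cu * Cθ)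
      · apply Eventually.of_forall
        intro n
        exact ((continuous_const.mul (hurc (e n) (heS n))).mul (huθc (e n) (heS n))
          |>.div (hWc (e n) (heS n)) (fun θ => (hWpos (e n) θ).ne')).aestronglyMeasurable
      · apply Eventually.of_forall
        intro n
        apply MeasureTheory.ae_of_all
        intro t ht
        have ht' : t ∈ Set.Icc (0:ℝ) (2*Real.pi) := by
          rw [Set.uIoc_of_le twopi_pos.le] at ht; exact ⟨ht.1.le, ht.2⟩
        have hmem : ((e n), t) ∈ K2 := ⟨⟨(heS n).1, hele n⟩, ht'⟩
        have b1 : |ur (e n) t| ≤ Cu := by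
          rw [← Real.norm_eq_abs]; exact hCu _ hmem
        have b2 : |uθ (e n) t| ≤ Cθ := by
          rw [← Real.norm_eq_abs]; exact hCθ _ hmem
        rw [Real.norm_eq_abs]
        have h8 : |e n * ur (e n) t * uθ (e n) t / W (e n) t|
            ≤ |e n * ur (e n) t * uθ (e n) t| := by
          rw [abs_div, abs_of_pos (hWpos (e n) t)]
          exact div_le_self (abs_nonneg _) (hW1le (e n) t)
        refine h8.trans ?_
        rw [abs_mul, abs_mul]
        have he1' : |e n| ≤ 1 := by
          rw [abs_of_pos (hepos n)]; exact hele n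
        calc |e n| * |ur (e n) t| * |uθ (e n) t|
            ≤ 1 * Cu * Cθ := by
              apply mul_le_mul (mul_le_mul he1' b1 (abs_nonneg _) zero_le_one) b2
                (abs_nonneg _) (by positivity)
          _ = Cu * Cθ := by ring
      · exact intervalIntegrable_const
      · apply MeasureTheory.ae_of_all
        intro t _
        have hmem1 : ((1:ℝ), t) ∈ Set.Icc r₀ 1 ×ˢ (Set.univ : Set ℝ) :=
          ⟨⟨hr₀1.le, le_refl 1⟩, trivial⟩
        have hseqt : Tendsto (fun n => (((e n) : ℝ), t)) atTop
            (𝓝[Set.Icc r₀ 1 ×ˢ (Set.univ : Set ℝ)] ((1:ℝ), t)) := by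
          apply tendsto_nhdsWithin_of_tendsto_nhds_of_eventually_within
          · exact (hetend.prodMk_nhds tendsto_const_nhds)
          · apply Eventually.of_forall
            intro n
            exact ⟨⟨(heS n).1, hele n⟩, trivial⟩
        have hpairt := ((hcont' ((1:ℝ), t) hmem1).tendsto).comp hseqt
        have hurt : Tendsto (fun n => ur (e n) t) atTop (𝓝 (ur 1 t)) :=
          (continuous_fst.tendsto _).comp hpairt
        have huθt : Tendsto (fun n => uθ (e n) t) atTop (𝓝 (uθ 1 t)) :=
          (continuous_snd.tendsto _).comp hpairt
        have hWt : Tendsto (fun n => W (e n) t) atTop (𝓝 1) := by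
          have harg : Tendsto (fun n => 1 + ((1 - (e n)^2)^2/4)
              * ((ur (e n) t)^2 + (uθ (e n) t)^2/(e n)^2)) atTop
              (𝓝 (1 + ((1 - (1:ℝ)^2)^2/4) * ((ur 1 t)^2 + (uθ 1 t)^2/(1:ℝ)^2))) := by
            apply Tendsto.add tendsto_const_nhds
            apply Tendsto.mul
            · exact (((tendsto_const_nhds (x := (1:ℝ))).sub (hetend.pow 2)).pow 2).div_const 4
            · exact (hurt.pow 2).add ((huθt.pow 2).div (hetend.pow 2) (by norm_num))
          have hval : (1 + ((1 - (1:ℝ)^2)^2/4) * ((ur 1 t)^2 + (uθ 1 t)^2/(1:ℝ)^2)) = 1 := by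
            norm_num
          rw [hval] at harg
          have hsqrt : Tendsto (fun n => W (e n) t) atTop (𝓝 (Real.sqrt 1)) := by
            have h2 : (fun n => W (e n) t) = fun n => Real.sqrt (1 + ((1 - (e n)^2)^2/4)
                * ((ur (e n) t)^2 + (uθ (e n) t)^2/(e n)^2)) :=
              funext fun n => hW (e n) t
            rw [h2]
            exact (Real.continuous_sqrt.tendsto 1).comp harg
          simpa using hsqrt
        have hfull : Tendsto (fun n => e n * ur (e n) t * uθ (e n) t / W (e n) t) atTop
            (𝓝 (1 * ur 1 t * uθ 1 t / 1)) :=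
          ((hetend.mul hurt).mul huθt).div hWt one_ne_zero
        have : (1 * ur 1 t * uθ 1 t / 1) = ur 1 t * uθ 1 t := by ring
        rwa [this] at hfull
    have hconst : Tendsto (fun _ : ℕ => ∫ θ in (0:ℝ)..(2*Real.pi),
        r * ur r θ * uθ r θ / W r θ) atTop
        (𝓝 (∫ θ in (0:ℝ)..(2*Real.pi), r * ur r θ * uθ r θ / W r θ)) := tendsto_const_nhds
    have hconst2 : Tendsto (fun n => ∫ θ in (0:ℝ)..(2*Real.pi),
        (e n) * ur (e n) θ * uθ (e n) θ / W (e n) θ) atTop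
        (𝓝 (∫ θ in (0:ℝ)..(2*Real.pi), r * ur r θ * uθ r θ / W r θ)) := by
      have heq : (fun n => ∫ θ in (0:ℝ)..(2*Real.pi),
          (e n) * ur (e n) θ * uθ (e n) θ / W (e n) θ)
          = fun _ : ℕ => ∫ θ in (0:ℝ)..(2*Real.pi), r * ur r θ * uθ r θ / W r θ := by
        funext n; exact (hFeq n).symm
      rw [heq]
      exact hconst
    exact tendsto_nhds_unique hconst2 hlim2
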